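/- For all x ∈ ℝ, the fourth derivative of 𝓔(x) = φ(x)/Φ̄(x) satisfies |𝓔⁗(x)| ≤ 196. -/

import Mathlib

open MeasureTheory Real Set Filter Topology
set_option maxHeartbeats 1000000

noncomputable section

/-- The standard gaussian density `φ(x) = exp(-x²/2)/√(2π)`. -/
def gphi (x : ℝ) : ℝ := Real.exp (-x ^ 2 / 2) / Real.sqrt (2 * Real.pi)

/-- The complementary gaussian distribution function `Φ̄(x) = ∫_x^∞ φ(u) du`. -/
def Phibar (x : ℝ) : ℝ := ∫ u in Set.Ioi x, gphi u

/-- `𝓔(x) = φ(x) / Φ̄(x)`. -/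
def gaussE (x : ℝ) : ℝ := gphi x / Phibar x

/-- `F_q(x) = 𝓔((κ - x)/√(1-q)) / √(1-q)` (with threshold `κ`). -/
def Fq (κ q x : ℝ) : ℝ := gaussE ((κ - x) / Real.sqrt (1 - q)) / Real.sqrt (1 - q)

/-- `P(ψ) = ∫ tanh(√ψ z)² φ(z) dz`. -/
def Pfun (ψ : ℝ) : ℝ := ∫ z : ℝ, Real.tanh (Real.sqrt ψ * z) ^ 2 * gphi z

/-- `R_κ(q, α) = α ∫ F_q(√q z)² φ(z) dz`. -/
def Rfun (κ q α : ℝ) : ℝ := α * ∫ z : ℝ, Fq κ q (Real.sqrt q * z) ^ 2 * gphi z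

/-- `𝒢_κ(α, q, ψ)`. -/
def Gfun (κ α q ψ : ℝ) : ℝ :=
  -(ψ * (1 - q)) / 2 + (∫ z : ℝ, Real.log (2 * Real.cosh (Real.sqrt ψ * z)) * gphi z)
    + α * ∫ z : ℝ, Real.log (Phibar ((κ - Real.sqrt q * z) / Real.sqrt (1 - q))) * gphi z

def alphaLB : ℝ := 0.833078599
def alphaUB : ℝ := 0.833078600
def qLB : ℝ := 0.56394907949
def qLU : ℝ := 0.56394907950
def qUL : ℝ := 0.56394908029
def qUB : ℝ := 0.56394908030
def psiLB : ℝ := 2.5763513100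
def psiLU : ℝ := 2.5763513103
def psiUL : ℝ := 2.5763513221
def psiUB : ℝ := 2.5763513224

lemma sqrt_two_pi_pos : 0 < Real.sqrt (2 * Real.pi) := by
  positivity

lemma gphi_pos (x : ℝ) : 0 < gphi x := by
  unfold gphi; positivity

lemma gphi_eq (x : ℝ) : gphi x = (Real.sqrt (2*Real.pi))⁻¹ * Real.exp (-(1/2) * x ^ 2) := by
  unfold gphi; rw [inv_mul_eq_div]
  ring_nf

lemma gphi_continuous : Continuous gphi := by
  unfold gphi
  exact (Real.continuous_exp.comp (by continuity)).div_const _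

lemma gphi_integrable : Integrable gphi := by
  have h := (integrable_exp_neg_mul_sq (by norm_num : (0:ℝ) < 1/2)).const_mul
    (Real.sqrt (2*Real.pi))⁻¹
  refine h.congr ?_
  filter_upwards with x
  rw [gphi_eq]

lemma hasDerivAt_gphi (x : ℝ) : HasDerivAt gphi (-x * gphi x) x := by
  have h1 : HasDerivAt (fun y : ℝ => -y ^ 2 / 2) (-x) x := by
    have := ((hasDerivAt_pow 2 x).neg).div_const 2
    simpa using this.congr_deriv (by ring)
  have h2 := (h1.exp).div_const (Real.sqrt (2 * Real.pi))
  unfold gphi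
  refine h2.congr_deriv ?_
  ring


lemma integral_gphi : ∫ x : ℝ, gphi x = 1 := by
  have h : ∫ x : ℝ, Real.exp (-(1/2) * x ^ 2) = Real.sqrt (Real.pi / (1/2)) :=
    integral_gaussian (1/2)
  calc ∫ x : ℝ, gphi x = ∫ x : ℝ, (Real.sqrt (2*Real.pi))⁻¹ * Real.exp (-(1/2) * x ^ 2) := by
        simp_rw [gphi_eq]
    _ = (Real.sqrt (2*Real.pi))⁻¹ * ∫ x : ℝ, Real.exp (-(1/2) * x ^ 2) := by
        rw [MeasureTheory.integral_const_mul]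
    _ = 1 := by
        rw [h]
        rw [show Real.pi / (1/2) = 2 * Real.pi by ring]
        rw [inv_mul_cancel₀ (ne_of_gt (by positivity))]

lemma Phibar_pos (x : ℝ) : 0 < Phibar x := by
  unfold Phibar
  rw [setIntegral_pos_iff_support_of_nonneg_ae]
  · have : (Function.support gphi) = univ := by
      ext y; simp [Function.support, ne_of_gt (gphi_pos y)]
    rw [this]
    simpa using measure_Ioi_pos (volume : Measure ℝ) x
  · filter_upwards with y using (gphi_pos y).le
  · exact gphi_integrable.integrableOn

lemma Phibar_split {a b : ℝ} (h : a ≤ b) :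
    Phibar a = (∫ u in Ioc a b, gphi u) + Phibar b := by
  unfold Phibar
  rw [← setIntegral_union (Ioc_disjoint_Ioi le_rfl) measurableSet_Ioi
    gphi_integrable.integrableOn gphi_integrable.integrableOn, Ioc_union_Ioi_eq_Ioi h]

lemma Phibar_le_one (x : ℝ) : Phibar x ≤ 1 := by
  rw [← integral_gphi]
  unfold Phibar
  exact setIntegral_le_integral gphi_integrable (by filter_upwards with y using (gphi_pos y).le)

lemma Phibar_antitone : Antitone Phibar := by
  intro a b hab
  rw [Phibar_split hab]
  have : 0 ≤ ∫ u in Ioc a b, gphi u :=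
    setIntegral_nonneg measurableSet_Ioc (fun y _ => (gphi_pos y).le)
  linarith

lemma Phibar_zero : Phibar 0 = 1/2 := by
  have hgneg : (fun x => gphi (-x)) = gphi := by
    ext u; unfold gphi; ring_nf
  have hsym : ∫ u in Iic (0:ℝ), gphi u = ∫ u in Ioi (0:ℝ), gphi u := by
    calc ∫ u in Iic (0:ℝ), gphi u = ∫ u in Iic (-(0:ℝ)), gphi u := by norm_num
      _ = ∫ x in Ioi (0:ℝ), gphi (-x) := (integral_comp_neg_Ioi 0 gphi).symm
      _ = ∫ x in Ioi (0:ℝ), gphi x := by rw [hgneg]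
  have htot : (∫ u in Iic (0:ℝ), gphi u) + ∫ u in Ioi (0:ℝ), gphi u = 1 := by
    rw [← integral_gphi]
    exact intervalIntegral.integral_Iic_add_Ioi gphi_integrable.integrableOn gphi_integrable.integrableOn
  unfold Phibar
  rw [hsym] at htot
  linarith

lemma Phibar_ge_half {x : ℝ} (hx : x ≤ 0) : 1/2 ≤ Phibar x := by
  rw [Phibar_split hx, Phibar_zero]
  have : 0 ≤ ∫ u in Ioc x 0, gphi u :=
    setIntegral_nonneg measurableSet_Ioc (fun y _ => (gphi_pos y).le)
  linarith

lemma hasDerivAt_Phibar (x : ℝ) : HasDerivAt Phibar (-gphi x) x := by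
  have key : ∀ y : ℝ, Phibar y = Phibar 0 - ∫ u in (0:ℝ)..y, gphi u := by
    intro y
    rcases le_total 0 y with h | h
    · rw [intervalIntegral.integral_of_le h, Phibar_split h]
      simp [MeasureTheory.integral_Ioc_eq_integral_Ioo]
    · rw [intervalIntegral.integral_of_ge h, Phibar_split h]
      abel_nf
  have heq : Phibar = fun y => Phibar 0 - ∫ u in (0:ℝ)..y, gphi u := funext key
  rw [heq]
  have hd : HasDerivAt (fun y => ∫ u in (0:ℝ)..y, gphi u) (gphi x) x :=
    intervalIntegral.integral_hasDerivAt_right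
      (gphi_integrable.intervalIntegrable)
      (gphi_continuous.stronglyMeasurable.stronglyMeasurableAtFilter)
      gphi_continuous.continuousAt
  simpa using (hd.const_sub (Phibar 0))


lemma sqrt_two_pi_ge : (2.506:ℝ) ≤ Real.sqrt (2 * Real.pi) := by
  rw [show (2.506:ℝ) = Real.sqrt (2.506^2) by rw [Real.sqrt_sq]; norm_num]
  apply Real.sqrt_le_sqrt
  nlinarith [Real.pi_gt_d6]

lemma gphi_le_exp (x : ℝ) : gphi x ≤ 0.4 * Real.exp (-x ^ 2 / 2) := by
  unfold gphi
  rw [div_le_iff₀ (by positivity)]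
  nlinarith [Real.exp_pos (-x^2/2), sqrt_two_pi_ge]

lemma gphi_le (x : ℝ) : gphi x ≤ 0.4 := by
  have h1 : Real.exp (-x ^ 2 / 2) ≤ 1 := by
    rw [Real.exp_le_one_iff]; nlinarith [sq_nonneg x]
  nlinarith [gphi_le_exp x, Real.exp_pos (-x^2/2)]

lemma gphi_tendsto : Tendsto gphi atTop (𝓝 0) := by
  have h0 : Tendsto (fun x : ℝ => x ^ 2) atTop atTop := tendsto_pow_atTop two_ne_zero
  have h1 : Tendsto (fun x : ℝ => -x ^ 2 / 2) atTop atBot := by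
    have := h0.atTop_mul_const_of_neg (show (-(1/2):ℝ) < 0 by norm_num)
    refine this.congr (fun x => by ring)
  have h2 : Tendsto (fun x : ℝ => Real.exp (-x ^ 2 / 2)) atTop (𝓝 0) :=
    Real.tendsto_exp_atBot.comp h1
  unfold gphi
  simpa using h2.div_const (Real.sqrt (2 * Real.pi))

lemma integral_id_mul_gphi {x : ℝ} (hx : 0 ≤ x) :
    ∫ u in Ioi x, u * gphi u = gphi x := by
  have h := integral_Ioi_of_hasDerivAt_of_nonneg
    (g := fun u => -gphi u) (g' := fun u => u * gphi u) (a := x) (l := 0)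
    (gphi_continuous.neg.continuousWithinAt)
    (fun u _ => by have h := (hasDerivAt_gphi u).neg; rwa [neg_mul, neg_neg] at h)
    (fun u hu => mul_nonneg (le_trans hx (le_of_lt hu)) (gphi_pos u).le)
    (by simpa using gphi_tendsto.neg)
  simpa using h

lemma integrableOn_id_mul_gphi {x : ℝ} (hx : 0 ≤ x) :
    IntegrableOn (fun u => u * gphi u) (Ioi x) := by
  exact integrableOn_Ioi_deriv_of_nonneg
    (gphi_continuous.neg.continuousWithinAt)
    (fun u _ => by have h := (hasDerivAt_gphi u).neg; rwa [neg_mul, neg_neg] at h)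
    (fun u hu => mul_nonneg (le_trans hx (le_of_lt hu)) (gphi_pos u).le)
    (by simpa [Pi.neg_def] using gphi_tendsto.neg)

lemma Phibar_le_gphi_div {x : ℝ} (hx : 0 < x) : Phibar x ≤ gphi x / x := by
  have hmono : Phibar x ≤ ∫ u in Ioi x, (u / x) * gphi u := by
    unfold Phibar
    apply setIntegral_mono_on gphi_integrable.integrableOn
    · refine MeasureTheory.IntegrableOn.congr_fun
        ((integrableOn_id_mul_gphi hx.le).div_const x) (fun u _ => by ring) measurableSet_Ioi
    · exact measurableSet_Ioi
    · intro u hu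
      have h1 : 1 ≤ u / x := (one_le_div hx).2 (le_of_lt hu)
      nlinarith [gphi_pos u]
  have heq : ∫ u in Ioi x, (u / x) * gphi u = gphi x / x := by
    rw [show (fun u => (u / x) * gphi u) = (fun u => (1/x) * (u * gphi u)) by ext u; ring]
    rw [MeasureTheory.integral_const_mul, integral_id_mul_gphi hx.le]
    ring
  linarith [hmono, heq.le]

lemma Phibar_tendsto : Tendsto Phibar atTop (𝓝 0) := by
  apply tendsto_of_tendsto_of_tendsto_of_le_of_le' tendsto_const_nhds
    (gphi_tendsto.div_atTop tendsto_id)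
  · filter_upwards with y using (Phibar_pos y).le
  · filter_upwards [eventually_gt_atTop 0] with y hy using Phibar_le_gphi_div hy

lemma exp_neg_sq_le {y : ℝ} (hy : 0 < y) : Real.exp (-y^2/2) ≤ 2 / y^2 := by
  have h1 : y^2/2 ≤ Real.exp (y^2/2) := by
    nlinarith [Real.add_one_le_exp (y^2/2)]
  have h2 : Real.exp (-y^2/2) = (Real.exp (y^2/2))⁻¹ := by
    rw [← Real.exp_neg]; ring_nf
  rw [h2, inv_eq_one_div, div_le_div_iff₀ (Real.exp_pos _) (by positivity)]
  nlinarith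

lemma xgphi_tendsto : Tendsto (fun x => x * gphi x) atTop (𝓝 0) := by
  apply tendsto_of_tendsto_of_tendsto_of_le_of_le' tendsto_const_nhds
    ((tendsto_const_nhds (x := (0.8:ℝ))).div_atTop tendsto_id)
  · filter_upwards [eventually_gt_atTop 0] with y hy
    exact mul_nonneg hy.le (gphi_pos y).le
  · filter_upwards [eventually_gt_atTop 0] with y hy
    have h3 : gphi y ≤ 0.4 * (2/y^2) := by
      have := gphi_le_exp y
      have h4 := exp_neg_sq_le hy
      rw [show -y^2/2 = -(y^2)/2 by ring] at this
      nlinarith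
    calc y * gphi y ≤ y * (0.4 * (2/y^2)) := by nlinarith [gphi_pos y]
      _ = 0.8 / y := by field_simp; ring


lemma tendsto_zero_of_le_div {f : ℝ → ℝ} (c : ℝ)
    (h : ∀ᶠ y in atTop, 0 ≤ f y ∧ f y ≤ c / y) : Tendsto f atTop (𝓝 0) := by
  apply tendsto_of_tendsto_of_tendsto_of_le_of_le' tendsto_const_nhds
    ((tendsto_const_nhds (x := c)).div_atTop tendsto_id)
  · filter_upwards [h] with y hy using hy.1
  · filter_upwards [h] with y hy using hy.2

lemma mills_ge {p dp : ℝ → ℝ} {a : ℝ}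
    (hderiv : ∀ x ∈ Ici a, HasDerivAt p (dp x) x)
    (hsign : ∀ x ∈ Ici a, x * p x - dp x - 1 ≤ 0)
    (hlim : Tendsto p atTop (𝓝 0)) :
    gphi a * p a ≤ Phibar a := by
  set h : ℝ → ℝ := fun y => Phibar y - gphi y * p y with hh
  have hd : ∀ y ∈ Ici a, HasDerivAt h (gphi y * (y * p y - dp y - 1)) y := by
    intro y hy
    have h1 := ((hasDerivAt_gphi y).mul (hderiv y hy))
    have h2 := (hasDerivAt_Phibar y).sub h1
    refine h2.congr_deriv ?_; ring
  have hmono : AntitoneOn h (Ici a) := by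
    apply antitoneOn_of_deriv_nonpos (convex_Ici a)
    · exact fun y hy => ((hd y hy).continuousAt).continuousWithinAt
    · intro y hy
      rw [interior_Ici] at hy
      exact DifferentiableAt.differentiableWithinAt (hd y (Ioi_subset_Ici_self hy)).differentiableAt
    · intro y hy
      rw [interior_Ici] at hy
      rw [(hd y (Ioi_subset_Ici_self hy)).deriv]
      have := hsign y (Ioi_subset_Ici_self hy)
      nlinarith [gphi_pos y]
  have hlim0 : Tendsto h atTop (𝓝 0) := by
    have := Phibar_tendsto.sub (gphi_tendsto.mul hlim)
    simpa using this
  have h0 : 0 ≤ h a := by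
    apply le_of_tendsto hlim0
    filter_upwards [eventually_ge_atTop a] with y hy
    exact hmono self_mem_Ici hy hy
  simp only [hh] at h0
  linarith

lemma mills_le {p dp : ℝ → ℝ} {a : ℝ}
    (hderiv : ∀ x ∈ Ici a, HasDerivAt p (dp x) x)
    (hsign : ∀ x ∈ Ici a, 0 ≤ x * p x - dp x - 1)
    (hlim : Tendsto p atTop (𝓝 0)) :
    Phibar a ≤ gphi a * p a := by
  set h : ℝ → ℝ := fun y => Phibar y - gphi y * p y with hh
  have hd : ∀ y ∈ Ici a, HasDerivAt h (gphi y * (y * p y - dp y - 1)) y := by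
    intro y hy
    have h1 := ((hasDerivAt_gphi y).mul (hderiv y hy))
    have h2 := (hasDerivAt_Phibar y).sub h1
    refine h2.congr_deriv ?_; ring
  have hmono : MonotoneOn h (Ici a) := by
    apply monotoneOn_of_deriv_nonneg (convex_Ici a)
    · exact fun y hy => ((hd y hy).continuousAt).continuousWithinAt
    · intro y hy
      rw [interior_Ici] at hy
      exact DifferentiableAt.differentiableWithinAt (hd y (Ioi_subset_Ici_self hy)).differentiableAt
    · intro y hy
      rw [interior_Ici] at hy
      rw [(hd y (Ioi_subset_Ici_self hy)).deriv]
      have := hsign y (Ioi_subset_Ici_self hy)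
      nlinarith [gphi_pos y]
  have hlim0 : Tendsto h atTop (𝓝 0) := by
    have := Phibar_tendsto.sub (gphi_tendsto.mul hlim)
    simpa using this
  have h0 : h a ≤ 0 := by
    apply ge_of_tendsto hlim0
    filter_upwards [eventually_ge_atTop a] with y hy
    exact hmono self_mem_Ici hy hy
  simp only [hh] at h0
  linarith

/-- M3 : `Φ̄(x) ≥ x φ(x)/(x²+1)` for all real `x`. -/
lemma Phibar_ge_rat1 (x : ℝ) : gphi x * (x / (x^2+1)) ≤ Phibar x := by
  apply mills_ge (dp := fun y => (1 - y^2)/(y^2+1)^2)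
  · intro y _
    have hne : (y:ℝ)^2 + 1 ≠ 0 := by positivity
    have h2 : HasDerivAt (fun y : ℝ => y^2 + 1) (2*y) y := by
      simpa using ((hasDerivAt_pow 2 y).add_const 1)
    have := (hasDerivAt_id y).div h2 hne
    refine this.congr_deriv ?_
    simp only [id_eq]
    field_simp
    ring
  · intro y _
    have hne : ((y:ℝ)^2 + 1) > 0 := by positivity
    have key : y * (y/(y^2+1)) - (1 - y^2)/(y^2+1)^2 - 1 = -2/(y^2+1)^2 := by
      field_simp; ring
    rw [key]
    rw [neg_div]
    have : (0:ℝ) ≤ 2 / (y^2+1)^2 := by positivity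
    linarith
  · apply tendsto_zero_of_le_div 1
    filter_upwards [eventually_ge_atTop 1] with y hy
    constructor
    · exact div_nonneg (by linarith) (by positivity)
    · rw [div_le_div_iff₀ (by positivity) (by linarith)]
      nlinarith

/-- `u ≤ 1`, i.e. `φ² ≤ Φ̄² + x φ Φ̄` for all real `x`. -/
lemma sq_gphi_le (x : ℝ) : gphi x ^ 2 ≤ Phibar x ^ 2 + x * gphi x * Phibar x := by
  set H : ℝ → ℝ := fun y => Phibar y ^ 2 + y * gphi y * Phibar y - gphi y ^ 2 with hH
  have hd : ∀ y : ℝ, HasDerivAt H (gphi y * (y * gphi y - (1 + y^2) * Phibar y)) y := by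
    intro y
    have h1 : HasDerivAt (fun y => Phibar y ^ 2) (2 * Phibar y * (-gphi y)) y := by
      exact ((hasDerivAt_Phibar y).pow 2).congr_deriv (by norm_num)
    have h2 : HasDerivAt (fun y : ℝ => y * gphi y) (gphi y + y * (-y * gphi y)) y := by
      exact ((hasDerivAt_id y).mul (hasDerivAt_gphi y)).congr_deriv (by simp)
    have h3 : HasDerivAt (fun y : ℝ => y * gphi y * Phibar y)
        ((gphi y + y * (-y * gphi y)) * Phibar y + (y * gphi y) * (-gphi y)) y :=
      h2.mul (hasDerivAt_Phibar y)
    have h4 : HasDerivAt (fun y => gphi y ^ 2) (2 * gphi y * (-y * gphi y)) y := by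
      exact ((hasDerivAt_gphi y).pow 2).congr_deriv (by norm_num)
    have := (h1.add h3).sub h4
    refine this.congr_deriv ?_
    ring
  have hmono : ∀ a : ℝ, AntitoneOn H (Ici a) := by
    intro a
    apply antitoneOn_of_deriv_nonpos (convex_Ici a)
    · exact fun y _ => ((hd y).continuousAt).continuousWithinAt
    · exact fun y _ => DifferentiableAt.differentiableWithinAt (hd y).differentiableAt
    · intro y _
      rw [(hd y).deriv]
      have hM3 := Phibar_ge_rat1 y
      have hpos : (0:ℝ) < y^2 + 1 := by positivity
      have : y * gphi y ≤ (1 + y^2) * Phibar y := by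
        rw [show gphi y * (y/(y^2+1)) = (y * gphi y)/(y^2+1) by ring] at hM3
        rw [div_le_iff₀ hpos] at hM3
        nlinarith
      nlinarith [gphi_pos y]
  have hlim0 : Tendsto H atTop (𝓝 0) := by
    have h1 := (Phibar_tendsto.mul Phibar_tendsto).add (xgphi_tendsto.mul Phibar_tendsto)
    have h2 := h1.sub (gphi_tendsto.mul gphi_tendsto)
    simp only [mul_zero, zero_mul, add_zero, sub_zero, zero_sub, neg_zero] at h2
    apply h2.congr
    intro y; simp only [hH]; ring
  have h0 : 0 ≤ H x := by
    apply le_of_tendsto hlim0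
    filter_upwards [eventually_ge_atTop x] with y hy
    exact hmono x self_mem_Ici hy hy
  simp only [hH] at h0
  linarith

/-- M4 : `Φ̄(x) ≤ φ(x) (x⁴-x²+3)/x⁵` for `x > 0`. -/
lemma Phibar_le_rat3 {x : ℝ} (hx : 0 < x) :
    Phibar x ≤ gphi x * ((x^4 - x^2 + 3)/x^5) := by
  apply mills_le (dp := fun y => (-y^4 + 3*y^2 - 15)/y^6)
  · intro y hy
    have hy0 : 0 < y := lt_of_lt_of_le hx hy
    have hne : y ≠ 0 := ne_of_gt hy0
    have hnum : HasDerivAt (fun y : ℝ => y^4 - y^2 + 3) (4*y^3 - 2*y) y := by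
      have := ((hasDerivAt_pow 4 y).sub (hasDerivAt_pow 2 y)).add_const 3
      simpa using this
    have hden : HasDerivAt (fun y : ℝ => y^5) (5*y^4) y := by
      simpa using hasDerivAt_pow 5 y
    have := hnum.div hden (by positivity)
    refine this.congr_deriv ?_
    field_simp
    ring
  · intro y hy
    have hy0 : 0 < y := lt_of_lt_of_le hx hy
    have key : y * ((y^4 - y^2 + 3)/y^5) - (-y^4 + 3*y^2 - 15)/y^6 - 1 = 15/y^6 := by
      field_simp
      ring
    rw [key]
    positivity
  · apply tendsto_zero_of_le_div 2
    filter_upwards [eventually_ge_atTop 2] with y hy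
    constructor
    · apply div_nonneg (by nlinarith [sq_nonneg (y^2-1)]) (by positivity)
    · rw [div_le_div_iff₀ (by positivity) (by linarith)]
      nlinarith [sq_nonneg (y^2-2), sq_nonneg y, mul_nonneg (by nlinarith : (0:ℝ) ≤ y)
        (sq_nonneg (y^2-2))]

/-- M5 : `Φ̄(x) ≥ φ(x) (x⁶-x⁴+3x²-15)/x⁷` for `x > 0`. -/
lemma Phibar_ge_rat4 {x : ℝ} (hx : 0 < x) :
    gphi x * ((x^6 - x^4 + 3*x^2 - 15)/x^7) ≤ Phibar x := by
  apply mills_ge (dp := fun y => (-y^6 + 3*y^4 - 15*y^2 + 105)/y^8)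
  · intro y hy
    have hy0 : 0 < y := lt_of_lt_of_le hx hy
    have hnum : HasDerivAt (fun y : ℝ => y^6 - y^4 + 3*y^2 - 15)
        (6*y^5 - 4*y^3 + 3*(2*y)) y := by
      have := (((hasDerivAt_pow 6 y).sub (hasDerivAt_pow 4 y)).add
        (((hasDerivAt_pow 2 y)).const_mul 3)).sub_const 15
      simpa using this
    have hden : HasDerivAt (fun y : ℝ => y^7) (7*y^6) y := by
      simpa using hasDerivAt_pow 7 y
    have := hnum.div hden (by positivity)
    refine this.congr_deriv ?_
    field_simp
    ring
  · intro y hy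
    have hy0 : 0 < y := lt_of_lt_of_le hx hy
    have key : y * ((y^6 - y^4 + 3*y^2 - 15)/y^7) - (-y^6 + 3*y^4 - 15*y^2 + 105)/y^8 - 1
        = -(105/y^8) := by
      field_simp
      ring
    rw [key]
    have : (0:ℝ) ≤ 105/y^8 := by positivity
    linarith
  · apply tendsto_zero_of_le_div 2
    filter_upwards [eventually_ge_atTop 2] with y hy
    constructor
    · have h4 : (0:ℝ) ≤ y^2 - 4 := by nlinarith
      have h5 : (0:ℝ) ≤ y^4 + 3*y^2 + 15 := by positivity
      apply div_nonneg (by nlinarith [mul_nonneg h4 h5]) (by positivity)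
    · rw [div_le_div_iff₀ (by positivity) (by linarith)]
      have h6 : (0:ℝ) ≤ y^2 - 3 := by nlinarith
      have h7 : (0:ℝ) ≤ y := by linarith
      nlinarith [mul_nonneg (mul_nonneg h7 (sq_nonneg y)) h6,
        mul_nonneg (mul_nonneg (mul_nonneg h7 h7) (mul_nonneg h7 h7)) h7]

lemma gaussE_pos (x : ℝ) : 0 < gaussE x := div_pos (gphi_pos x) (Phibar_pos x)

lemma gaussE_ge_x (x : ℝ) : x ≤ gaussE x := by
  rcases le_or_gt x 0 with hx | hx
  · linarith [gaussE_pos x]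
  · have h := Phibar_le_gphi_div hx
    have hP := Phibar_pos x
    rw [le_div_iff₀ hx] at h
    unfold gaussE
    rw [le_div_iff₀ hP]
    nlinarith

lemma u_le_one (x : ℝ) : gaussE x ^ 2 - x * gaussE x ≤ 1 := by
  have h := sq_gphi_le x
  have hP := Phibar_pos x
  unfold gaussE
  rw [div_pow, show x * (gphi x / Phibar x) = (x * gphi x)/Phibar x by ring]
  rw [div_sub_div _ _ (by positivity) (ne_of_gt hP), div_le_one (by positivity)]
  nlinarith

lemma gaussE_le_of_nonpos {x : ℝ} (hx : x ≤ 0) : gaussE x ≤ 2 * gphi x := by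
  have h := Phibar_ge_half hx
  have hP := Phibar_pos x
  unfold gaussE
  rw [div_le_iff₀ hP]
  nlinarith [gphi_pos x]

lemma t_lower {x : ℝ} (hx : 3 ≤ x) :
    x^4 - 2*x^2 - 5 ≤ (gaussE x - x) * x^5 := by
  have hx0 : (0:ℝ) < x := by linarith
  have h := Phibar_le_rat3 hx0
  have hP := Phibar_pos x
  have hE : x^5 ≤ gaussE x * (x^4 - x^2 + 3) := by
    unfold gaussE
    rw [div_mul_eq_mul_div, le_div_iff₀ hP]
    calc x^5 * Phibar x ≤ x^5 * (gphi x * ((x^4 - x^2 + 3)/x^5)) := by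
          apply mul_le_mul_of_nonneg_left h (by positivity)
      _ = gphi x * (x^4 - x^2 + 3) := by field_simp
  have key : (x^4-x^2+3) * ((gaussE x - x)*x^5 - (x^4-2*x^2-5))
      = x^5*(gaussE x*(x^4-x^2+3) - x^5) + (x^2+15) := by ring
  have hA : 0 ≤ x^5*(gaussE x*(x^4-x^2+3) - x^5) :=
    mul_nonneg (by positivity) (by linarith)
  have hdpos : (0:ℝ) < x^4-x^2+3 := by nlinarith [sq_nonneg (x^2-1)]
  nlinarith [key, hA, hdpos]

lemma t_upper {x : ℝ} (hx : 3 ≤ x) :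
    (gaussE x - x) * x^5 ≤ x^4 - 2*x^2 + 14 := by
  have hx0 : (0:ℝ) < x := by linarith
  have h := Phibar_ge_rat4 hx0
  have hP := Phibar_pos x
  have h9 : (0:ℝ) ≤ x^2 - 9 := by nlinarith
  have hden : (0:ℝ) < x^6 - x^4 + 3*x^2 - 15 := by
    nlinarith [mul_nonneg h9 (by positivity : (0:ℝ) ≤ x^4 + 8*x^2 + 75), sq_nonneg x]
  have hE : gaussE x * (x^6 - x^4 + 3*x^2 - 15) ≤ x^7 := by
    unfold gaussE
    rw [div_mul_eq_mul_div, div_le_iff₀ hP]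
    calc gphi x * (x^6 - x^4 + 3*x^2 - 15)
        = x^7 * (gphi x * ((x^6 - x^4 + 3*x^2 - 15)/x^7)) := by field_simp
      _ ≤ x^7 * Phibar x := by apply mul_le_mul_of_nonneg_left h (by positivity)
  have key : (x^6-x^4+3*x^2-15) * ((x^4-2*x^2+14) - (gaussE x - x)*x^5)
      = x^5*(x^7 - gaussE x*(x^6-x^4+3*x^2-15)) + (4*x^6-35*x^4+72*x^2-210) := by ring
  have hA : 0 ≤ x^5*(x^7 - gaussE x*(x^6-x^4+3*x^2-15)) :=
    mul_nonneg (by positivity) (by linarith)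
  have hpoly : (0:ℝ) ≤ 4*x^6-35*x^4+72*x^2-210 := by
    nlinarith [mul_nonneg h9 (by positivity : (0:ℝ) ≤ 4*x^4+x^2+81)]
  nlinarith [key, hA, hpoly, hden]


def E1 (y : ℝ) : ℝ := gaussE y ^ 2 - y * gaussE y
def E2 (y : ℝ) : ℝ := 2*gaussE y^3 - 3*(y*gaussE y^2) + y^2*gaussE y - gaussE y
def E3 (y : ℝ) : ℝ := 6*gaussE y^4 - 12*(y*gaussE y^3) + 7*(y^2*gaussE y^2)
  - 4*gaussE y^2 - (y^3*gaussE y) + 3*(y*gaussE y)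
def E4 (y : ℝ) : ℝ := 24*gaussE y^5 - 60*(y*gaussE y^4) + 50*(y^2*gaussE y^3)
  - 20*gaussE y^3 - 15*(y^3*gaussE y^2) + 25*(y*gaussE y^2)
  + y^4*gaussE y - 6*(y^2*gaussE y) + 3*gaussE y

lemma hasDerivAt_gaussE (x : ℝ) : HasDerivAt gaussE (E1 x) x := by
  have h := (hasDerivAt_gphi x).div (hasDerivAt_Phibar x) (ne_of_gt (Phibar_pos x))
  have hP := Phibar_pos x
  refine h.congr_deriv ?_
  unfold E1 gaussE
  field_simp
  ring

lemma hasDerivAt_E1 (x : ℝ) : HasDerivAt E1 (E2 x) x := by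
  have h := hasDerivAt_gaussE x
  have h2 := (h.pow 2).sub ((hasDerivAt_id x).mul h)
  refine h2.congr_deriv ?_
  unfold E2 E1
  simp only [id_eq]
  ring

lemma hasDerivAt_E2 (x : ℝ) : HasDerivAt E2 (E3 x) x := by
  have h := hasDerivAt_gaussE x
  have h2 := ((((h.pow 3).const_mul 2).sub
      (((hasDerivAt_id x).mul (h.pow 2)).const_mul 3)).add
      ((hasDerivAt_pow 2 x).mul h)).sub h
  refine h2.congr_deriv ?_
  unfold E3 E1
  simp only [id_eq, Pi.pow_apply]
  ring

lemma hasDerivAt_E3 (x : ℝ) : HasDerivAt E3 (E4 x) x := by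
  have h := hasDerivAt_gaussE x
  have a1 := (h.pow 4).const_mul (6:ℝ)
  have a2 := ((hasDerivAt_id x).mul (h.pow 3)).const_mul (12:ℝ)
  have a3 := ((hasDerivAt_pow 2 x).mul (h.pow 2)).const_mul (7:ℝ)
  have a4 := (h.pow 2).const_mul (4:ℝ)
  have a5 := (hasDerivAt_pow 3 x).mul h
  have a6 := ((hasDerivAt_id x).mul h).const_mul (3:ℝ)
  have h2 := ((((a1.sub a2).add a3).sub a4).sub a5).add a6
  refine h2.congr_deriv ?_
  unfold E4 E1
  simp only [id_eq, Pi.pow_apply]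
  ring

lemma iteratedDeriv_four (x : ℝ) : iteratedDeriv 4 gaussE x = E4 x := by
  have d1 : deriv gaussE = E1 := funext fun y => (hasDerivAt_gaussE y).deriv
  have d2 : deriv E1 = E2 := funext fun y => (hasDerivAt_E1 y).deriv
  have d3 : deriv E2 = E3 := funext fun y => (hasDerivAt_E2 y).deriv
  have d4 : deriv E3 = E4 := funext fun y => (hasDerivAt_E3 y).deriv
  rw [show (4:ℕ) = 3 + 1 from rfl, iteratedDeriv_succ]
  rw [show (3:ℕ) = 2 + 1 from rfl, iteratedDeriv_succ]
  rw [show (2:ℕ) = 1 + 1 from rfl, iteratedDeriv_succ]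
  rw [iteratedDeriv_one]
  rw [d1, d2, d3, d4]


lemma w_sq (x : ℝ) : Real.exp (-x^2/2) * x^2 ≤ 0.74 := by
  have h := Real.add_one_le_exp (x^2/2 - 1)
  have hsub : Real.exp (x^2/2 - 1) = Real.exp (x^2/2) * (Real.exp 1)⁻¹ := by
    rw [Real.exp_sub]; ring
  have hneg : Real.exp (-x^2/2) = (Real.exp (x^2/2))⁻¹ := by
    rw [← Real.exp_neg]; ring_nf
  have he : (2.718:ℝ) < Real.exp 1 := by
    have := Real.exp_one_gt_d9; linarith
  have hA : (0:ℝ) < Real.exp (x^2/2) := Real.exp_pos _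
  have hE : (0:ℝ) < Real.exp 1 := Real.exp_pos _
  rw [hneg]
  rw [hsub] at h
  -- x^2/2 ≤ exp(x^2/2)/e  ⇒  x^2 * exp(x^2/2)⁻¹ ≤ 2/e ≤ 0.74
  have hq : Real.exp (x^2/2) * (Real.exp 1)⁻¹ * Real.exp 1 = Real.exp (x^2/2) := by
    field_simp
  have h1 : x^2/2 * Real.exp 1 ≤ Real.exp (x^2/2) := by nlinarith [h, hE, hq]
  rw [inv_eq_one_div, mul_comm, mul_one_div, div_le_iff₀ hA]
  nlinarith [h1, he, sq_nonneg x]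

lemma w_qu (x : ℝ) : Real.exp (-x^2/2) * x^4 ≤ 2.17 := by
  have h := Real.add_one_le_exp (x^2/4 - 1)
  have hsub : Real.exp (x^2/4 - 1) = Real.exp (x^2/4) * (Real.exp 1)⁻¹ := by
    rw [Real.exp_sub]; ring
  have hneg : Real.exp (-x^2/2) = (Real.exp (x^2/2))⁻¹ := by
    rw [← Real.exp_neg]; ring_nf
  have hhalf : Real.exp (x^2/2) = Real.exp (x^2/4) * Real.exp (x^2/4) := by
    rw [← Real.exp_add]; ring_nf
  have he : (2.718:ℝ) < Real.exp 1 := by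
    have := Real.exp_one_gt_d9; linarith
  have hA : (0:ℝ) < Real.exp (x^2/4) := Real.exp_pos _
  have hE : (0:ℝ) < Real.exp 1 := Real.exp_pos _
  have h1 : x^2/4 * Real.exp 1 ≤ Real.exp (x^2/4) := by
    rw [hsub] at h
    calc x^2/4 * Real.exp 1 ≤ (Real.exp (x^2/4) * (Real.exp 1)⁻¹ - 1 + 1) * Real.exp 1 := by
          nlinarith
      _ = Real.exp (x^2/4) - Real.exp 1 + Real.exp 1 := by field_simp
      _ = Real.exp (x^2/4) := by ring
  -- square it : x^4/16 * e^2 ≤ exp(x^2/4)^2 = exp(x^2/2)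
  have h2 : x^4/16 * (Real.exp 1 * Real.exp 1) ≤ Real.exp (x^2/2) := by
    rw [hhalf]
    nlinarith [mul_self_le_mul_self (by positivity : (0:ℝ) ≤ x^2/4*Real.exp 1) h1]
  have he2 : (7.387:ℝ) ≤ Real.exp 1 * Real.exp 1 := by nlinarith [he]
  rw [hneg, inv_eq_one_div, mul_comm, mul_one_div, div_le_iff₀ (Real.exp_pos _)]
  nlinarith [h2, he2, sq_nonneg (x^2), Real.exp_pos (x^2/2)]

lemma regionA {E x w : ℝ} (hx : x ≤ 0) (hE : 0 < E) (hEw : E ≤ 0.8*w) (hw1 : w ≤ 1)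
    (hw0 : 0 < w) (h2 : w*x^2 ≤ 0.74) (h4 : w*x^4 ≤ 2.17) (hu : E*(E-x) ≤ 1) :
    |24*E^5 - 60*x*E^4 + (50*x^2-20)*E^3 + (-15*x^3+25*x)*E^2 + (x^4-6*x^2+3)*E| ≤ 196 := by
  have ht0 : (0:ℝ) < E - x := by linarith
  have hu0 : 0 ≤ E*(E-x) := by positivity
  have m8 : E ≤ 0.8 := by nlinarith
  have e2 : E^2 ≤ 0.64*w^2 := by nlinarith
  have m7 : E^3 ≤ 0.512 := by nlinarith [sq_nonneg E, hE]
  have m6 : E^2*(E-x) ≤ 0.8 := by nlinarith [mul_nonneg hE.le (sub_nonneg.2 hu)]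
  have m4 : E^4*(E-x) ≤ 0.512 := by
    nlinarith [mul_nonneg (pow_nonneg hE.le 3) (sub_nonneg.2 hu)]
  have hu2 : (E*(E-x))^2 ≤ 1 := by nlinarith
  have m3 : E^3*(E-x)^2 ≤ 0.8 := by nlinarith [mul_nonneg hE.le (sub_nonneg.2 hu2)]
  have s1 : (E-x)^2 ≤ 2*E^2 + 2*x^2 := by nlinarith [sq_nonneg (E+x)]
  have s2 : E*(E-x)^2 ≤ 0.8*(w*(E-x)^2) := by
    nlinarith [mul_nonneg (sub_nonneg.2 hEw) (sq_nonneg (E-x))]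
  have w3 : w^3 ≤ 1 := pow_le_one₀ hw0.le hw1
  have w5 : w^5 ≤ 1 := pow_le_one₀ hw0.le hw1
  have s3 : w*E^2 ≤ 0.64 := by nlinarith [mul_le_mul_of_nonneg_left e2 hw0.le]
  have m5 : E*(E-x)^2 ≤ 2.21 := by
    nlinarith [mul_le_mul_of_nonneg_left s1 hw0.le, s2, s3, h2]
  have m2 : E^2*(E-x)^3 ≤ 2.21 := by
    nlinarith [mul_nonneg (sub_nonneg.2 hu) (mul_nonneg hE.le (sq_nonneg (E-x))), m5]
  have e4 : E^4 ≤ 0.4096*w^4 := by nlinarith [e2, sq_nonneg E, sq_nonneg w, sq_nonneg (E*w)]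
  have s4 : w*E^4 ≤ 0.41 := by nlinarith [mul_le_mul_of_nonneg_left e4 hw0.le]
  have s5 : w*(E^2*x^2) ≤ 0.48 := by
    nlinarith [mul_le_mul_of_nonneg_left (mul_le_mul_of_nonneg_right e2 (sq_nonneg x)) hw0.le,
      mul_le_mul_of_nonneg_left h2 (by nlinarith [sq_nonneg w] : (0:ℝ) ≤ 0.64*w^2),
      sq_nonneg w, hw1, hw0]
  have s6 : (E-x)^4 ≤ (2*E^2+2*x^2)^2 := by
    nlinarith [s1, sq_nonneg (E-x), sq_nonneg (E+x)]
  have s7 : w*(E-x)^4 ≤ 4*(w*E^4) + 8*(w*(E^2*x^2)) + 4*(w*x^4) := by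
    nlinarith [mul_le_mul_of_nonneg_left s6 hw0.le]
  have s8 : E*(E-x)^4 ≤ 0.8*(w*(E-x)^4) := by
    nlinarith [mul_nonneg (sub_nonneg.2 hEw) (pow_nonneg ht0.le 4)]
  have m1 : E*(E-x)^4 ≤ 11.4 := by nlinarith [s7, s8, s4, s5, h4]
  have n1 : 0 ≤ E*(E-x)^4 := by positivity
  have n2 : 0 ≤ E^2*(E-x)^3 := by positivity
  have n3 : 0 ≤ E^3*(E-x)^2 := by positivity
  have n4 : 0 ≤ E^4*(E-x) := by positivity
  have n5 : 0 ≤ E*(E-x)^2 := by positivity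
  have n6 : 0 ≤ E^2*(E-x) := by positivity
  have n7 : 0 ≤ E^3 := by positivity
  have n8 : 0 ≤ E := hE.le
  have hid : 24*E^5 - 60*x*E^4 + (50*x^2-20)*E^3 + (-15*x^3+25*x)*E^2 + (x^4-6*x^2+3)*E
      = E*(E-x)^4 + 11*(E^2*(E-x)^3) + 11*(E^3*(E-x)^2) + E^4*(E-x)
        - 6*(E*(E-x)^2) - 13*(E^2*(E-x)) - E^3 + 3*E := by ring
  rw [abs_le]
  constructor
  · rw [hid]; linarith [m1, m2, m3, m4, m5, m6, m7, m8, n1, n2, n3, n4, n5, n6, n7, n8]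
  · rw [hid]; linarith [m1, m2, m3, m4, m5, m6, m7, m8, n1, n2, n3, n4, n5, n6, n7, n8]

lemma regionB1 {E x : ℝ} (hx0 : 0 ≤ x) (hx1 : x ≤ 1) (hE : 0 < E) (hxE : x ≤ E)
    (hu : E*(E-x) ≤ 1) :
    |24*E^5 - 60*x*E^4 + (50*x^2-20)*E^3 + (-15*x^3+25*x)*E^2 + (x^4-6*x^2+3)*E| ≤ 196 := by
  have ht0 : (0:ℝ) ≤ E - x := by linarith
  have hmax : E ≤ 1.62 := by nlinarith
  have ht2 : E - x ≤ 1.62 := by linarith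
  have hEc : E^3 ≤ 4.26 := by nlinarith [sq_nonneg E]
  have htc : (E-x)^3 ≤ 4.26 := by nlinarith [sq_nonneg (E-x)]
  have hu0 : 0 ≤ E*(E-x) := by positivity
  have hu2 : (E*(E-x))^2 ≤ 1 := by nlinarith
  have b1 : E*(E-x)^4 ≤ 4.26 := by
    nlinarith [mul_nonneg (sub_nonneg.2 hu) (pow_nonneg ht0 3), htc]
  have b2 : E^2*(E-x)^3 ≤ 1.62 := by
    nlinarith [mul_nonneg (sub_nonneg.2 hu2) ht0]
  have b3 : E^3*(E-x)^2 ≤ 1.62 := by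
    nlinarith [mul_nonneg (sub_nonneg.2 hu2) hE.le]
  have b4 : E^4*(E-x) ≤ 4.26 := by
    nlinarith [mul_nonneg (sub_nonneg.2 hu) (pow_nonneg hE.le 3), hEc]
  have b5 : E*(E-x)^2 ≤ 1.62 := by
    nlinarith [mul_nonneg (sub_nonneg.2 hu) ht0]
  have b6 : E^2*(E-x) ≤ 1.62 := by
    nlinarith [mul_nonneg (sub_nonneg.2 hu) hE.le]
  have n1 : 0 ≤ E*(E-x)^4 := by positivity
  have n2 : 0 ≤ E^2*(E-x)^3 := by positivity
  have n3 : 0 ≤ E^3*(E-x)^2 := by positivity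
  have n4 : 0 ≤ E^4*(E-x) := by positivity
  have n5 : 0 ≤ E*(E-x)^2 := by positivity
  have n6 : 0 ≤ E^2*(E-x) := by positivity
  have n7 : 0 ≤ E^3 := by positivity
  have hid : 24*E^5 - 60*x*E^4 + (50*x^2-20)*E^3 + (-15*x^3+25*x)*E^2 + (x^4-6*x^2+3)*E
      = E*(E-x)^4 + 11*(E^2*(E-x)^3) + 11*(E^3*(E-x)^2) + E^4*(E-x)
        - 6*(E*(E-x)^2) - 13*(E^2*(E-x)) - E^3 + 3*E := by ring
  rw [abs_le]
  constructor
  · rw [hid]; linarith [b1, b2, b3, b4, b5, b6, hEc, hmax, n1, n2, n3, n4, n5, n6, n7, hE.le]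
  · rw [hid]; linarith [b1, b2, b3, b4, b5, b6, hEc, hmax, n1, n2, n3, n4, n5, n6, n7, hE.le]

lemma regionB2 {E x : ℝ} (hx1 : 1 ≤ x) (hx3 : x ≤ 3) (hE : 0 < E) (hxE : x ≤ E)
    (hu : E*(E-x) ≤ 1) :
    |24*E^5 - 60*x*E^4 + (50*x^2-20)*E^3 + (-15*x^3+25*x)*E^2 + (x^4-6*x^2+3)*E| ≤ 196 := by
  have ht0 : (0:ℝ) ≤ E - x := by linarith
  have hE1 : (1:ℝ) ≤ E := by linarith
  have ht1 : E - x ≤ 1 := by nlinarith [mul_nonneg ht0 (sub_nonneg.2 hE1)]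
  have hmax : E ≤ 3.303 := by nlinarith
  have hEc : E^3 ≤ 36.1 := by nlinarith [sq_nonneg E, hE.le]
  have htc : (E-x)^3 ≤ 1 := by nlinarith [sq_nonneg (E-x)]
  have hu0 : 0 ≤ E*(E-x) := by positivity
  have hu2 : (E*(E-x))^2 ≤ 1 := by nlinarith
  have b1 : E*(E-x)^4 ≤ 1 := by
    nlinarith [mul_nonneg (sub_nonneg.2 hu) (pow_nonneg ht0 3), htc]
  have b2 : E^2*(E-x)^3 ≤ 1 := by
    nlinarith [mul_nonneg (sub_nonneg.2 hu2) ht0]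
  have b3 : E^3*(E-x)^2 ≤ 3.303 := by
    nlinarith [mul_nonneg (sub_nonneg.2 hu2) hE.le]
  have b4 : E^4*(E-x) ≤ 36.1 := by
    nlinarith [mul_nonneg (sub_nonneg.2 hu) (pow_nonneg hE.le 3), hEc]
  have b5 : E*(E-x)^2 ≤ 1 := by
    nlinarith [mul_nonneg (sub_nonneg.2 hu) ht0]
  have b6 : E^2*(E-x) ≤ 3.303 := by
    nlinarith [mul_nonneg (sub_nonneg.2 hu) hE.le]
  have n1 : 0 ≤ E*(E-x)^4 := by positivity
  have n2 : 0 ≤ E^2*(E-x)^3 := by positivity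
  have n3 : 0 ≤ E^3*(E-x)^2 := by positivity
  have n4 : 0 ≤ E^4*(E-x) := by positivity
  have n5 : 0 ≤ E*(E-x)^2 := by positivity
  have n6 : 0 ≤ E^2*(E-x) := by positivity
  have n7 : 0 ≤ E^3 := by positivity
  have hid : 24*E^5 - 60*x*E^4 + (50*x^2-20)*E^3 + (-15*x^3+25*x)*E^2 + (x^4-6*x^2+3)*E
      = E*(E-x)^4 + 11*(E^2*(E-x)^3) + 11*(E^3*(E-x)^2) + E^4*(E-x)
        - 6*(E*(E-x)^2) - 13*(E^2*(E-x)) - E^3 + 3*E := by ring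
  rw [abs_le]
  constructor
  · rw [hid]; linarith [b1, b2, b3, b4, b5, b6, hEc, hmax, n1, n2, n3, n4, n5, n6, n7, hE.le]
  · rw [hid]; linarith [b1, b2, b3, b4, b5, b6, hEc, hmax, n1, n2, n3, n4, n5, n6, n7, hE.le]


/-- Region C upper endpoint: for x = 3+y ≥ 3, with E = x + (x⁴-2x²+14)/x⁵,  P4(E,x) ≤ 196. -/
lemma regC_hi {y : ℝ} (hy : 0 ≤ y) :
    (fun E => 24*E^5 - 60*(3+y)*E^4 + (50*(3+y)^2-20)*E^3 + (-15*(3+y)^3+25*(3+y))*E^2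
      + ((3+y)^4-6*(3+y)^2+3)*E)
      ((3+y) + ((3+y)^4-2*(3+y)^2+14)/(3+y)^5) ≤ 196 := by
  have hx0 : (0:ℝ) < 3 + y := by linarith
  have hx5 : ((3+y):ℝ)^5 ≠ 0 := by positivity
  rw [← sub_nonneg]
  have key : 196 - (fun E => 24*E^5 - 60*(3+y)*E^4 + (50*(3+y)^2-20)*E^3
      + (-15*(3+y)^3+25*(3+y))*E^2 + ((3+y)^4-6*(3+y)^2+3)*E)
      ((3+y) + ((3+y)^4-2*(3+y)^2+14)/(3+y)^5)
      = (158711887279104 + 1331626483494288*y^1 + 5356560526387314*y^2 + 13753715761077552*y^3 + 25316155878821796*y^4 + 35563930992533268*y^5 + 39631778467934454*y^6 + 35948468317627152*y^7 + 27020700258959976*y^8 + 17045505590004948*y^9 + 9105981958413748*y^10 + 4145017282507872*y^11 + 1613950293451976*y^12 + 538559418161448*y^13 + 154016050823724*y^14 + 37678232281440*y^15 + 7854980635216*y^16 + 1386984546648*y^17 + 205582745274*y^18 + 25258010352*y^19 + 2526762100*y^20 + 200604228*y^21 + 12161534*y^22 + 528912*y^23 + 14696*y^24 + 196*y^25) /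 (3+y)^25 := by
    field_simp
    ring
  rw [key]
  apply div_nonneg _ (by positivity)
  have p01 := pow_nonneg hy 1
  have p02 := pow_nonneg hy 2
  have p03 := pow_nonneg hy 3
  have p04 := pow_nonneg hy 4
  have p05 := pow_nonneg hy 5
  have p06 := pow_nonneg hy 6
  have p07 := pow_nonneg hy 7
  have p08 := pow_nonneg hy 8
  have p09 := pow_nonneg hy 9
  have p10 := pow_nonneg hy 10
  have p11 := pow_nonneg hy 11
  have p12 := pow_nonneg hy 12
  have p13 := pow_nonneg hy 13
  have p14 := pow_nonneg hy 14
  have p15 := pow_nonneg hy 15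
  have p16 := pow_nonneg hy 16
  have p17 := pow_nonneg hy 17
  have p18 := pow_nonneg hy 18
  have p19 := pow_nonneg hy 19
  have p20 := pow_nonneg hy 20
  have p21 := pow_nonneg hy 21
  have p22 := pow_nonneg hy 22
  have p23 := pow_nonneg hy 23
  have p24 := pow_nonneg hy 24
  have p25 := pow_nonneg hy 25
  positivity


lemma regC_lo {y : ℝ} (hy : 0 ≤ y) :
    -196 ≤ (fun E => 24*E^5 - 60*(3+y)*E^4 + (50*(3+y)^2-20)*E^3 + (-15*(3+y)^3+25*(3+y))*E^2
      + ((3+y)^4-6*(3+y)^2+3)*E)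
      ((3+y) + ((3+y)^4-2*(3+y)^2-5)/(3+y)^5) := by
  have hx0 : (0:ℝ) < 3 + y := by linarith
  have hx5 : ((3+y):ℝ)^5 ≠ 0 := by positivity
  rw [← sub_nonneg]
  have key : (fun E => 24*E^5 - 60*(3+y)*E^4 + (50*(3+y)^2-20)*E^3
      + (-15*(3+y)^3+25*(3+y))*E^2 + ((3+y)^4-6*(3+y)^2+3)*E)
      ((3+y) + ((3+y)^4-2*(3+y)^2-5)/(3+y)^5) - (-196)
      = (158629118257086 + 1325094419179674*y^1 + 5314175981203629*y^2 + 13617480428752140*y^3 + 25033928491728045*y^4 + 35142972013756512*y^5 + 39151577511887172*y^6 + 35513632839756312*y^7 + 26700347612796495*y^8 + 16850237661332400*y^9 + 9006361646109142*y^10 + 4102149545141616*y^11 + 1598317950831836*y^12 + 533718066605400*y^13 + 152742902714820*y^14 + 37394660116320*y^15 + 7801755819338*y^16 + 1378634036058*y^17 + 204500644825*y^18 + 25144174980*y^19 + 2517282315*y^20 + 200002704*y^21 + 12134204*y^22 + 528120*y^23 + 14685*y^24 + 196*y^25) / (3+y)^25 := by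
    field_simp
    ring
  rw [key]
  apply div_nonneg _ (by positivity)
  have p01 := pow_nonneg hy 1
  have p02 := pow_nonneg hy 2
  have p03 := pow_nonneg hy 3
  have p04 := pow_nonneg hy 4
  have p05 := pow_nonneg hy 5
  have p06 := pow_nonneg hy 6
  have p07 := pow_nonneg hy 7
  have p08 := pow_nonneg hy 8
  have p09 := pow_nonneg hy 9
  have p10 := pow_nonneg hy 10
  have p11 := pow_nonneg hy 11
  have p12 := pow_nonneg hy 12
  have p13 := pow_nonneg hy 13
  have p14 := pow_nonneg hy 14
  have p15 := pow_nonneg hy 15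
  have p16 := pow_nonneg hy 16
  have p17 := pow_nonneg hy 17
  have p18 := pow_nonneg hy 18
  have p19 := pow_nonneg hy 19
  have p20 := pow_nonneg hy 20
  have p21 := pow_nonneg hy 21
  have p22 := pow_nonneg hy 22
  have p23 := pow_nonneg hy 23
  have p24 := pow_nonneg hy 24
  have p25 := pow_nonneg hy 25
  positivity


lemma deriv_nonneg_C {x e : ℝ} (hx : 3 ≤ x)
    (hs1 : x^4-2*x^2-5 ≤ (e-x)*x^5) (hs2 : (e-x)*x^5 ≤ x^4-2*x^2+14) :
    0 ≤ 120*e^4 - 240*x*e^3 + 3*(50*x^2-20)*e^2 + 2*(-15*x^3+25*x)*e + (x^4-6*x^2+3) := by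
  have hx0 : (0:ℝ) < x := by linarith
  have hx2 : (9:ℝ) ≤ x^2 := by nlinarith
  have hnum : (58:ℝ) ≤ x^4 - 2*x^2 - 5 := by nlinarith [sq_nonneg (x^2-9)]
  have hs0 : 0 ≤ e - x := by nlinarith [hs1, hnum, pow_pos hx0 5]
  have he0 : 0 < e := by linarith
  have hex : (e-x)*x ≤ 1 := by nlinarith [hs2, pow_pos hx0 4, hx2]
  have hxe : x ≤ e := by linarith
  have hxe3 : x^3 ≤ e^3 := pow_le_pow_left₀ hx0.le hxe 3
  have hxe4 : x^4 ≤ e^4 := pow_le_pow_left₀ hx0.le hxe 4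
  have c1 : 26*(x^4-2*x^2-5) ≤ 26*(e^3*((e-x)*x^2)) := by
    have q0 : 0 ≤ (e-x)*x^2 := mul_nonneg hs0 (by positivity)
    have q1 : x^3*((e-x)*x^2) ≤ e^3*((e-x)*x^2) := mul_le_mul_of_nonneg_right hxe3 q0
    nlinarith [hs1, q1]
  have c2 : x^6 ≤ e^4*x^2 := by nlinarith [hxe4, pow_pos hx0 2]
  have c3 : e^2*x^2 ≤ (x^2+1)^2 := by nlinarith [hex, mul_pos he0 hx0]
  have c4a : (e-x)*x ≤ 1 := hex
  have c4 : e*((e-x)*x^2) ≤ x^2 + 1 := by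
    have : e*((e-x)*x^2) = ((e-x)*x)*x^2 + ((e-x)*x)^2 := by ring
    nlinarith [c4a, sq_nonneg ((e-x)*x), pow_pos hx0 2, mul_nonneg hs0 hx0.le]
  have c5 : (e-x)^2*x^2 ≤ 1 := by
    nlinarith [c4a, mul_nonneg hs0 hx0.le]
  have c6 : (0:ℝ) ≤ x^6 + 10*x^4 - 119*x^2 - 190 := by
    nlinarith [hx2, sq_nonneg (x^2-9), pow_pos hx0 2]
  have n1 : 0 ≤ (e-x)^4*x^2 := mul_nonneg (by positivity) (by positivity)
  have n2 : 0 ≤ e*(e-x)^3*x^2 :=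
    mul_nonneg (mul_nonneg he0.le (pow_nonneg hs0 3)) (by positivity)
  have n3 : 0 ≤ e^2*(e-x)^2*x^2 := by positivity
  have hident : (120*e^4 - 240*x*e^3 + 3*(50*x^2-20)*e^2 + 2*(-15*x^3+25*x)*e
      + (x^4-6*x^2+3)) * x^2
      = (e-x)^4*x^2 + 26*(e*(e-x)^3*x^2) + 66*(e^2*(e-x)^2*x^2)
        + 26*(e^3*((e-x)*x^2)) + e^4*x^2 - 6*((e-x)^2*x^2)
        - 38*(e*((e-x)*x^2)) - 16*(e^2*x^2) + 3*x^2 := by ring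
  have key : 0 ≤ (120*e^4 - 240*x*e^3 + 3*(50*x^2-20)*e^2 + 2*(-15*x^3+25*x)*e
      + (x^4-6*x^2+3)) * x^2 := by
    rw [hident]
    linarith [c1, c2, c3, c4, c5, c6, n1, n2, n3]
  nlinarith [key, pow_pos hx0 2]

lemma regionC {x E : ℝ} (hx : 3 ≤ x)
    (hlo : x^4-2*x^2-5 ≤ (E-x)*x^5) (hhi : (E-x)*x^5 ≤ x^4-2*x^2+14) :
    |24*E^5 - 60*x*E^4 + (50*x^2-20)*E^3 + (-15*x^3+25*x)*E^2 + (x^4-6*x^2+3)*E| ≤ 196 := by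
  have hx0 : (0:ℝ) < x := by linarith
  have hx5 : (0:ℝ) < x^5 := by positivity
  have hgd : ∀ e : ℝ, HasDerivAt (fun e => 24*e^5 - 60*x*e^4 + (50*x^2-20)*e^3
      + (-15*x^3+25*x)*e^2 + (x^4-6*x^2+3)*e) (120*e^4 - 240*x*e^3 + 3*(50*x^2-20)*e^2
      + 2*(-15*x^3+25*x)*e + (x^4-6*x^2+3)) e := by
    intro e
    have h1 := ((hasDerivAt_pow 5 e).const_mul (24:ℝ))
    have h2 := ((hasDerivAt_pow 4 e).const_mul (60*x))
    have h3 := ((hasDerivAt_pow 3 e).const_mul (50*x^2-20))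
    have h4 := ((hasDerivAt_pow 2 e).const_mul (-15*x^3+25*x))
    have h5 := ((hasDerivAt_id' e).const_mul (x^4-6*x^2+3))
    have h6 := (((h1.sub h2).add h3).add h4).add h5
    have h7 : HasDerivAt (fun e => 24*e^5 - 60*x*e^4 + (50*x^2-20)*e^3
        + (-15*x^3+25*x)*e^2 + (x^4-6*x^2+3)*e)
        (24*(5*e^4) - 60*x*(4*e^3) + (50*x^2-20)*(3*e^2) + (-15*x^3+25*x)*(2*e)
          + (x^4-6*x^2+3)*1) e := by
      refine h6.congr_deriv ?_
      all_goals push_cast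
      all_goals ring
    convert h7 using 1
    ring
  set g : ℝ → ℝ := fun e => 24*e^5 - 60*x*e^4 + (50*x^2-20)*e^3 + (-15*x^3+25*x)*e^2
    + (x^4-6*x^2+3)*e with hg
  set lo : ℝ := x + (x^4-2*x^2-5)/x^5 with hlodef
  set hi : ℝ := x + (x^4-2*x^2+14)/x^5 with hhidef
  have hElo : lo ≤ E := by
    rw [hlodef]
    rw [← sub_nonneg]
    have : E - (x + (x^4-2*x^2-5)/x^5) = ((E-x)*x^5 - (x^4-2*x^2-5))/x^5 := by
      field_simp; ring
    rw [this]
    apply div_nonneg (by linarith) hx5.le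
  have hEhi : E ≤ hi := by
    rw [hhidef, ← sub_nonneg]
    have : (x + (x^4-2*x^2+14)/x^5) - E = ((x^4-2*x^2+14) - (E-x)*x^5)/x^5 := by
      field_simp; ring
    rw [this]
    apply div_nonneg (by linarith) hx5.le
  have hlohi : lo ≤ hi := le_trans hElo hEhi
  have hmono : MonotoneOn g (Icc lo hi) := by
    apply monotoneOn_of_deriv_nonneg (convex_Icc lo hi)
    · exact fun e _ => ((hgd e).continuousAt).continuousWithinAt
    · exact fun e _ => ((hgd e).differentiableAt).differentiableWithinAt
    · intro e he
      rw [interior_Icc] at he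
      rw [(hgd e).deriv]
      apply deriv_nonneg_C hx
      · have h1 : lo ≤ e := he.1.le
        rw [hlodef] at h1
        rw [← sub_nonneg]
        have h2 : (e-x)*x^5 - (x^4-2*x^2-5) = (e - (x + (x^4-2*x^2-5)/x^5))*x^5 := by
          field_simp; ring
        rw [h2]
        exact mul_nonneg (by linarith) hx5.le
      · have h1 : e ≤ hi := he.2.le
        rw [hhidef] at h1
        rw [← sub_nonneg]
        have h2 : (x^4-2*x^2+14) - (e-x)*x^5 = ((x + (x^4-2*x^2+14)/x^5) - e)*x^5 := by
          field_simp; ring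
        rw [h2]
        exact mul_nonneg (by linarith) hx5.le
  have hmemE : E ∈ Icc lo hi := ⟨hElo, hEhi⟩
  have hub : g E ≤ 196 := by
    have h1 : g E ≤ g hi := hmono hmemE (right_mem_Icc.2 hlohi) hEhi
    have h2 : g hi ≤ 196 := by
      obtain ⟨y, hy, rfl⟩ : ∃ y, 0 ≤ y ∧ x = 3 + y := ⟨x-3, by linarith, by ring⟩
      exact regC_hi hy
    linarith
  have hlb : -196 ≤ g E := by
    have h1 : g lo ≤ g E := hmono (left_mem_Icc.2 hlohi) hmemE hElo
    have h2 : -196 ≤ g lo := by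
      obtain ⟨y, hy, rfl⟩ : ∃ y, 0 ≤ y ∧ x = 3 + y := ⟨x-3, by linarith, by ring⟩
      exact regC_lo hy
    linarith
  rw [abs_le]
  exact ⟨hlb, hub⟩


/-- Lemma 9.2. The fourth derivative of `𝓔(x) = φ(x)/Φ̄(x)` satisfies
`|𝓔⁗(x)| ≤ 196` for all `x ∈ ℝ`. -/
theorem gaussE_fourth_derivative_bound (x : ℝ) :
    |iteratedDeriv 4 gaussE x| ≤ 196 := by
  rw [iteratedDeriv_four x]
  have hform : E4 x = 24*(gaussE x)^5 - 60*x*(gaussE x)^4 + (50*x^2-20)*(gaussE x)^3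
      + (-15*x^3+25*x)*(gaussE x)^2 + (x^4-6*x^2+3)*(gaussE x) := by
    unfold E4; ring
  rw [hform]
  have hE := gaussE_pos x
  have hu : gaussE x * (gaussE x - x) ≤ 1 := by
    have := u_le_one x
    nlinarith
  rcases le_or_gt x 0 with hx | hx
  · -- region A
    have hEw : gaussE x ≤ 0.8 * Real.exp (-x^2/2) := by
      have h1 := gaussE_le_of_nonpos hx
      have h2 := gphi_le_exp x
      rw [show -x^2/2 = -(x^2)/2 by ring] at h2
      linarith
    have hw1 : Real.exp (-x^2/2) ≤ 1 := by
      rw [Real.exp_le_one_iff]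
      nlinarith [sq_nonneg x]
    exact regionA hx hE hEw hw1 (Real.exp_pos _) (w_sq x) (w_qu x) hu
  · rcases le_or_gt x 1 with hx1 | hx1
    · exact regionB1 hx.le hx1 hE (gaussE_ge_x x) hu
    · rcases le_or_gt x 3 with hx3 | hx3
      · exact regionB2 hx1.le hx3 hE (gaussE_ge_x x) hu
      · exact regionC hx3.le (t_lower hx3.le) (t_upper hx3.le)
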